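/- Fix a real number m > 1 and a natural number n ≥ 3, and let (X, Y, W) : ℝ → ℝ³ be a differentiable solution of the Böhm system with X(t) ≥ 0, Y(t) > 0, W(t) > 0 and α·X(t) < 1 for all t. Define κ(t) = W(t)^{−2m/(m+n−1)} · Y(t)^{−2(n−1)/(m+n−1)} · (1 − α·X(t))². Then κ′(t) ≤ 0 for all t, with equality at t if and only if X(t) = α. (This is the assertion in the proof of Theorem 5.7 of the paper that κ is a Lyapunov function in the first octant.) -/

import Mathlib

noncomputable section

lemma key_alg (m ν x y α c : ℝ)
    (h1 : c * α * (m - 1) = 1)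
    (h2 : (ν - 1) * c * (m - 1) = α * (m * (m + ν - 2)))
    (ha2 : α ^ 2 * (m * (m + ν - 2)) = ν - 1) :
    (-2*m*((m-1)*x^2 - y^2) - 2*(ν-1)*((m-1)*x^2 - y^2 - (m-1)*c*x + 1)) * (1 - α*x)
      - 2*α*(m+ν-1)*(x*((m-1)*x^2 - y^2) + (m-1)*(c*y^2 - x))
    = -2*(m*(m+ν-2))*(x-α)^2 := by
  linear_combination (2*(ν-1)*(1-α*x) - 2*y^2*(m+ν-1)) * h1
    + 2*(x-α)*(1-α*x) * h2 - 2*x*(x-α) * ha2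

lemma key_alg2 (m ν x y α c : ℝ) (hm : m - 1 ≠ 0) (he : m + ν - 1 ≠ 0)
    (h1 : c * α * (m - 1) = 1)
    (h2 : (ν - 1) * c * (m - 1) = α * (m * (m + ν - 2)))
    (ha2 : α ^ 2 * (m * (m + ν - 2)) = ν - 1) :
    (-2*m/(m+ν-1) * (x^2 - y^2/(m-1)) + (-2*(ν-1)/(m+ν-1)) * ((x^2 - y^2/(m-1)) - c*x + 1/(m-1))) * (1 - α*x)
      - 2*α*(x*(x^2 - y^2/(m-1)) + c*y^2 - x)
    = -2*(m*(m+ν-2))/((m-1)*(m+ν-1)) * (x-α)^2 := by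
  have h := key_alg m ν x y α c h1 h2 ha2
  have hf : (m + ν - 1) * (m + ν - 1)⁻¹ = 1 := mul_inv_cancel₀ he
  have hg : (m - 1) * (m - 1)⁻¹ = 1 := mul_inv_cancel₀ hm
  rw [div_mul_eq_mul_div (-2*(m*(m+ν-2))) ((m-1)*(m+ν-1)) ((x-α)^2),
    eq_div_iff (mul_ne_zero hm he)]
  linear_combination h
    + ((1-α*x) * (-2*m*(m-1)*(x^2 - y^2/(m-1)) - 2*(ν-1)*(m-1)*((x^2 - y^2/(m-1)) - c*x + 1/(m-1)))) * hf
    + (2*m*y^2*(1-α*x) - 2*(ν-1)*(1-y^2)*(1-α*x) + 2*α*(m+ν-1)*x*y^2) * hg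

/-- The assertion in the proof of Theorem 5.7 of the paper that
`κ = W^{−2m/(m+n−1)} Y^{−2(n−1)/(m+n−1)} (1 − αX)²` is a Lyapunov function for the
Böhm system in the first octant: along a solution with `X ≥ 0`, `Y > 0`, `W > 0`
and `αX < 1`, one has `κ′ ≤ 0`, with equality at `t` exactly when `X t = α`. -/
theorem boehm_lyapunov (m : ℝ) (hm : 1 < m) (n : ℕ) (hn : 3 ≤ n)
    (X Y W : ℝ → ℝ)
    (c : ℝ) (hc : c = (1 / (m - 1)) * Real.sqrt (m * (m + n - 2) / (n - 1)))
    (α : ℝ) (hα : α = Real.sqrt ((n - 1) / (m * (m + n - 2))))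
    (hX : ∀ t, HasDerivAt X
      (X t * (X t ^ 2 - Y t ^ 2 / (m - 1)) + c * Y t ^ 2 - X t) t)
    (hY : ∀ t, HasDerivAt Y
      (Y t * (X t ^ 2 - Y t ^ 2 / (m - 1)) - c * X t * Y t + Y t / (m - 1)) t)
    (hW : ∀ t, HasDerivAt W (W t * (X t ^ 2 - Y t ^ 2 / (m - 1))) t)
    (hXnonneg : ∀ t, 0 ≤ X t) (hYpos : ∀ t, 0 < Y t) (hWpos : ∀ t, 0 < W t)
    (hαX : ∀ t, α * X t < 1)
    (κ : ℝ → ℝ)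
    (hκ : ∀ t, κ t = W t ^ (-2 * m / (m + n - 1)) *
      Y t ^ (-2 * ((n : ℝ) - 1) / (m + n - 1)) * (1 - α * X t) ^ 2) :
    ∀ t, deriv κ t ≤ 0 ∧ (deriv κ t = 0 ↔ X t = α) := by
  have hν : (3:ℝ) ≤ (n:ℝ) := by exact_mod_cast hn
  have hm1 : (0:ℝ) < m - 1 := by linarith
  have hn1 : (0:ℝ) < (n:ℝ) - 1 := by linarith
  have hA : (0:ℝ) < m * (m + (n:ℝ) - 2) := by nlinarith
  have he : (0:ℝ) < m + (n:ℝ) - 1 := by linarith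
  have hαpos : 0 < α := by
    rw [hα]; exact Real.sqrt_pos.mpr (by positivity)
  have ha2 : α ^ 2 * (m * (m + (n:ℝ) - 2)) = (n:ℝ) - 1 := by
    rw [hα, Real.sq_sqrt (by positivity)]
    have : (m + (n:ℝ) - 2) ≠ 0 := by nlinarith
    field_simp
  have h1 : c * α * (m - 1) = 1 := by
    have hs : Real.sqrt (m * (m + (n:ℝ) - 2) / ((n:ℝ) - 1)) *
        Real.sqrt (((n:ℝ) - 1) / (m * (m + (n:ℝ) - 2))) = 1 := by
      rw [← Real.sqrt_mul (by positivity)]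
      rw [show m * (m + (n:ℝ) - 2) / ((n:ℝ) - 1) * (((n:ℝ) - 1) / (m * (m + (n:ℝ) - 2))) = 1 by
        have : (m + (n:ℝ) - 2) ≠ 0 := by nlinarith
        field_simp]
      exact Real.sqrt_one
    rw [hc, hα]
    calc 1 / (m - 1) * Real.sqrt (m * (m + (n:ℝ) - 2) / ((n:ℝ) - 1)) *
          Real.sqrt (((n:ℝ) - 1) / (m * (m + (n:ℝ) - 2))) * (m - 1)
        = (Real.sqrt (m * (m + (n:ℝ) - 2) / ((n:ℝ) - 1)) *
            Real.sqrt (((n:ℝ) - 1) / (m * (m + (n:ℝ) - 2)))) * (1 / (m - 1) * (m - 1)) := by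
          ring
      _ = 1 := by rw [hs, one_div, inv_mul_cancel₀ hm1.ne']; ring
  have h2 : ((n:ℝ) - 1) * c * (m - 1) = α * (m * (m + (n:ℝ) - 2)) := by
    linear_combination α * (m * (m + (n:ℝ) - 2)) * h1 - c * (m - 1) * ha2
  have hκeq : κ = fun s => W s ^ (-2 * m / (m + (n:ℝ) - 1)) *
      Y s ^ (-2 * ((n : ℝ) - 1) / (m + (n:ℝ) - 1)) * (1 - α * X s) ^ 2 := funext hκ
  subst hκeq
  intro t
  have hU := (hW t).rpow_const (p := -2 * m / (m + (n:ℝ) - 1)) (Or.inl (hWpos t).ne')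
  have hV := (hY t).rpow_const (p := -2 * ((n:ℝ) - 1) / (m + (n:ℝ) - 1)) (Or.inl (hYpos t).ne')
  have hB := (((hX t).const_mul α).const_sub 1).pow 2
  have hprod := (hU.mul hV).mul hB
  have hWp : W t ^ (-2 * m / (m + (n:ℝ) - 1) - 1) * W t = W t ^ (-2 * m / (m + (n:ℝ) - 1)) := by
    rw [← Real.rpow_add_one (hWpos t).ne']; ring_nf
  have hYq : Y t ^ (-2 * ((n:ℝ) - 1) / (m + (n:ℝ) - 1) - 1) * Y t
      = Y t ^ (-2 * ((n:ℝ) - 1) / (m + (n:ℝ) - 1)) := by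
    rw [← Real.rpow_add_one (hYpos t).ne']; ring_nf
  have hE := key_alg2 m (n:ℝ) (X t) (Y t) α c hm1.ne' he.ne' h1 h2 ha2
  have hfin : deriv (fun s => W s ^ (-2 * m / (m + (n:ℝ) - 1)) *
      Y s ^ (-2 * ((n : ℝ) - 1) / (m + (n:ℝ) - 1)) * (1 - α * X s) ^ 2) t
      = W t ^ (-2 * m / (m + (n:ℝ) - 1)) * Y t ^ (-2 * ((n:ℝ) - 1) / (m + (n:ℝ) - 1)) *
        (1 - α * X t) *
        (-2*(m*(m+(n:ℝ)-2))/((m-1)*(m+(n:ℝ)-1)) * (X t - α)^2) := by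
    rw [(show HasDerivAt (fun s => W s ^ (-2 * m / (m + (n:ℝ) - 1)) *
      Y s ^ (-2 * ((n : ℝ) - 1) / (m + (n:ℝ) - 1)) * (1 - α * X s) ^ 2) _ t from hprod).deriv]
    push_cast
    simp only [Pi.pow_apply, Pi.mul_apply]
    linear_combination
      (W t ^ (-2 * m / (m + (n:ℝ) - 1)) * Y t ^ (-2 * ((n:ℝ) - 1) / (m + (n:ℝ) - 1)) *
        (1 - α * X t)) * hE
      + ((X t ^ 2 - Y t ^ 2 / (m - 1)) * (-2 * m / (m + (n:ℝ) - 1)) *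
          Y t ^ (-2 * ((n:ℝ) - 1) / (m + (n:ℝ) - 1)) * (1 - α * X t)^2) * hWp
      + (W t ^ (-2 * m / (m + (n:ℝ) - 1)) * (-2 * ((n:ℝ) - 1) / (m + (n:ℝ) - 1)) *
          ((X t ^ 2 - Y t ^ 2 / (m - 1)) - c * X t + 1 / (m - 1)) * (1 - α * X t)^2) * hYq
  have hKpos : 0 < W t ^ (-2 * m / (m + (n:ℝ) - 1)) * Y t ^ (-2 * ((n:ℝ) - 1) / (m + (n:ℝ) - 1)) *
      (1 - α * X t) * (2*(m*(m+(n:ℝ)-2))/((m-1)*(m+(n:ℝ)-1))) := by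
    have h1' := Real.rpow_pos_of_pos (hWpos t) (-2 * m / (m + (n:ℝ) - 1))
    have h2' := Real.rpow_pos_of_pos (hYpos t) (-2 * ((n:ℝ) - 1) / (m + (n:ℝ) - 1))
    have h3' : 0 < 1 - α * X t := by linarith [hαX t]
    positivity
  set K := W t ^ (-2 * m / (m + (n:ℝ) - 1)) * Y t ^ (-2 * ((n:ℝ) - 1) / (m + (n:ℝ) - 1)) *
      (1 - α * X t) * (2*(m*(m+(n:ℝ)-2))/((m-1)*(m+(n:ℝ)-1))) with hK
  have hfin' : deriv (fun s => W s ^ (-2 * m / (m + (n:ℝ) - 1)) *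
      Y s ^ (-2 * ((n : ℝ) - 1) / (m + (n:ℝ) - 1)) * (1 - α * X s) ^ 2) t
      = -(K * (X t - α)^2) := by
    rw [hfin, hK]; ring
  rw [hfin']
  refine ⟨neg_nonpos_of_nonneg (mul_nonneg hKpos.le (sq_nonneg _)), ?_, ?_⟩
  · intro h0
    have hd : (X t - α)^2 = 0 := by
      rcases mul_eq_zero.mp (neg_eq_zero.mp h0) with h | h
      · exact absurd h hKpos.ne'
      · exact h
    have := (pow_eq_zero_iff two_ne_zero).mp hd
    linarith [sub_eq_zero.mp this]
  · intro hxa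
    rw [hxa]; ring

end
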